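/- Every commutative Boolean network is trapping. More precisely, for every Boolean network f of dimension n the following are equivalent: (1) f is commutative, i.e. f^{(i,j)} = f^{(j,i)} for all i, j ∈ [n]; (2) [y, f(x)] ⊆ [y, f(y)] ⊆ [x, f(x)] for all x ∈ 𝔹^n and all y ∈ [x, f(x)]; (3) f^{(S Δ T)} ⊑ f^{(S,T)} ⊑ f^{(S ∪ T)} for all S, T ⊆ [n]. -/
import Mathlib


/-!  Common definitions: Boolean networks on `Fin n → Bool`. -/

/-- The update `f^{(S)}` of the coordinates in `S` according to `f`. -/
def upd {n : ℕ} (f : (Fin n → Bool) → Fin n → Bool) (S : Finset (Fin n)) :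
    (Fin n → Bool) → Fin n → Bool :=
  fun x i => if i ∈ S then f x i else x i

/-- `f^{(S,T)} = f^{(T)} ∘ f^{(S)}`. -/
def upd2 {n : ℕ} (f : (Fin n → Bool) → Fin n → Bool) (S T : Finset (Fin n)) :
    (Fin n → Bool) → Fin n → Bool :=
  upd f T ∘ upd f S

/-- `Δ(x,y)`, the set of coordinates where `x` and `y` differ. -/
def delta {n : ℕ} (x y : Fin n → Bool) : Set (Fin n) := {i | x i ≠ y i}

/-- Hamming distance. -/
noncomputable def hdist {n : ℕ} (x y : Fin n → Bool) : ℕ := (delta x y).ncard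

/-- The interval (subcube) `[x,y]`. -/
def interval {n : ℕ} (x y : Fin n → Bool) : Set (Fin n → Bool) :=
  {z | delta x z ⊆ delta x y}

/-- A subcube of `𝔹^n`: fix the coordinates in `S` to `0` and those in `T` to `1`. -/
def IsSubcube {n : ℕ} (X : Set (Fin n → Bool)) : Prop :=
  ∃ S T : Set (Fin n), Disjoint S T ∧
    X = {x | (∀ i ∈ S, x i = false) ∧ (∀ i ∈ T, x i = true)}

/-- The partial order `f ⊑ g` on Boolean networks. -/
def BNle {n : ℕ} (f g : (Fin n → Bool) → Fin n → Bool) : Prop :=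
  ∀ x, delta x (f x) ⊆ delta x (g x)

/-- A trapspace of `f`: an invariant subcube. -/
def IsTrapspace {n : ℕ} (f : (Fin n → Bool) → Fin n → Bool)
    (X : Set (Fin n → Bool)) : Prop :=
  IsSubcube X ∧ ∀ x ∈ X, f x ∈ X

/-- The collection of all trapspaces of `f`. -/
def trapspaces {n : ℕ} (f : (Fin n → Bool) → Fin n → Bool) :
    Set (Set (Fin n → Bool)) :=
  {X | IsTrapspace f X}

/-- The principal trapspace `T_f(x)`: the smallest trapspace of `f` containing `x`. -/
def Tprin {n : ℕ} (f : (Fin n → Bool) → Fin n → Bool) (x : Fin n → Bool) :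
    Set (Fin n → Bool) :=
  ⋂₀ {X | IsTrapspace f X ∧ x ∈ X}

/-- The collection of principal trapspaces of `f`. -/
def PT {n : ℕ} (f : (Fin n → Bool) → Fin n → Bool) : Set (Set (Fin n → Bool)) :=
  {X | ∃ x, X = Tprin f x}

-- The opposite of `x` in a subcube `X` containing `x`: the coordinate `i` is flipped
-- iff some element of `X` differs from `x` there; so `[x, opp X x] = X` when `X` is a
-- subcube containing `x`.
open scoped Classical in
noncomputable def opp {n : ℕ} (X : Set (Fin n → Bool)) (x : Fin n → Bool) :
    Fin n → Bool :=
  fun i => if ∃ y ∈ X, y i ≠ x i then !(x i) else x i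

/-- The trapping closure `f^T`, characterised by `[x, f^T(x)] = T_f(x)`. -/
noncomputable def trapClosure {n : ℕ} (f : (Fin n → Bool) → Fin n → Bool) :
    (Fin n → Bool) → Fin n → Bool :=
  fun x => opp (Tprin f x) x

/-- The general asynchronous graph of `f`, as a relation on `𝔹^n`. -/
def GA {n : ℕ} (f : (Fin n → Bool) → Fin n → Bool) :
    (Fin n → Bool) → (Fin n → Bool) → Prop :=
  fun x y => ∃ S : Finset (Fin n), y = upd f S x

/-- The asynchronous graph of `f`, as a relation on `𝔹^n`. -/
def Agraph {n : ℕ} (f : (Fin n → Bool) → Fin n → Bool) :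
    (Fin n → Bool) → (Fin n → Bool) → Prop :=
  fun x y => ∃ i : Fin n, y = upd f {i} x

/-- The trapping graph of `f`: an edge `(x,y)` iff `y ∈ T_f(x)`. -/
def TG {n : ℕ} (f : (Fin n → Bool) → Fin n → Bool) :
    (Fin n → Bool) → (Fin n → Bool) → Prop :=
  fun x y => y ∈ Tprin f x

/-- A network is trapping if its general asynchronous graph is transitive. -/
def IsTrapping {n : ℕ} (f : (Fin n → Bool) → Fin n → Bool) : Prop :=
  Transitive (GA f)

/-- A commutative Boolean network: `f^{(i,j)} = f^{(j,i)}` for all `i,j`. -/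
def IsCommutative' {n : ℕ} (f : (Fin n → Bool) → Fin n → Bool) : Prop :=
  ∀ i j : Fin n, upd2 f {i} {j} = upd2 f {j} {i}

/-- `𝒜(x)`: the intersection of all members of `𝒜` containing `x`
(`= 𝔹^n` if no member contains `x`, since `⋂₀ ∅ = univ`). -/
def collAt {n : ℕ} (𝒜 : Set (Set (Fin n → Bool))) (x : Fin n → Bool) :
    Set (Fin n → Bool) :=
  ⋂₀ {A ∈ 𝒜 | x ∈ A}

/-- The network `F(𝒜)`, characterised by `[x, F(𝒜)(x)] = 𝒜(x)`. -/
noncomputable def Fnet {n : ℕ} (𝒜 : Set (Set (Fin n → Bool))) :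
    (Fin n → Bool) → Fin n → Bool :=
  fun x => opp (collAt 𝒜 x) x

/-- A collection of subcubes is pre-principal if `𝒬 = {𝒬(x) : x ∈ 𝔹^n}`. -/
def PrePrincipal {n : ℕ} (𝒬 : Set (Set (Fin n → Bool))) : Prop :=
  𝒬 = {X | ∃ x, X = collAt 𝒬 x}

/-- `λ(𝒜)`: unions of subcollections of `𝒜` that are subcubes. -/
def lamColl {n : ℕ} (𝒜 : Set (Set (Fin n → Bool))) : Set (Set (Fin n → Bool)) :=
  {X | ∃ ℛ ⊆ 𝒜, X = ⋃₀ ℛ ∧ IsSubcube X}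

/-- `μ(𝒜) = {𝒜(x) : x ∈ 𝔹^n}`. -/
def muColl {n : ℕ} (𝒜 : Set (Set (Fin n → Bool))) : Set (Set (Fin n → Bool)) :=
  {X | ∃ x, X = collAt 𝒜 x}

/-- A pre-ideal collection of subcubes. -/
def PreIdeal {n : ℕ} (𝒥 : Set (Set (Fin n → Bool))) : Prop :=
  Set.univ ∈ 𝒥 ∧
  (∀ A ∈ 𝒥, ∀ B ∈ 𝒥, (A ∩ B).Nonempty → A ∩ B ∈ 𝒥) ∧
  (∀ ℛ ⊆ 𝒥, IsSubcube (⋃₀ ℛ) → ⋃₀ ℛ ∈ 𝒥)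

/-- The collection of minimal trapspaces of `f`. -/
def MT {n : ℕ} (f : (Fin n → Bool) → Fin n → Bool) : Set (Set (Fin n → Bool)) :=
  {X | IsTrapspace f X ∧ ∀ Y, IsTrapspace f Y → ¬ Y ⊂ X}

/-- `M(f)`: the union of the minimal trapspaces of `f`. -/
def Mset {n : ℕ} (f : (Fin n → Bool) → Fin n → Bool) : Set (Fin n → Bool) :=
  ⋃₀ MT f

-- The min-trapping extension `f^M`: `[x, f^M(x)] = T_f(x)` if `x ∈ M(f)`,
-- and `f^M(x) = ¬x` otherwise.
open scoped Classical in
noncomputable def minExt {n : ℕ} (f : (Fin n → Bool) → Fin n → Bool) :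
    (Fin n → Bool) → Fin n → Bool :=
  fun x => if x ∈ Mset f then opp (Tprin f x) x else fun i => !(x i)

lemma bool_ne_ne : ∀ (a b c : Bool), a ≠ b → a ≠ c → b = c := by decide

lemma bool_iff_eq : ∀ (a b c : Bool), ((a ≠ b) ↔ (a ≠ c)) → b = c := by decide

lemma mem_delta {n : ℕ} {x y : Fin n → Bool} {i : Fin n} :
    i ∈ delta x y ↔ x i ≠ y i := Iff.rfl

lemma comm_step {n : ℕ} {f : (Fin n → Bool) → Fin n → Bool} (hc : IsCommutative' f)
    {i j : Fin n} (hij : j ≠ i) (x : Fin n → Bool) :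
    f (upd f {i} x) j = f x j := by
  have h := congrFun (congrFun (hc i j) x) j
  simp only [upd2, Function.comp_apply, upd, Finset.mem_singleton, if_pos rfl,
    if_neg hij] at h
  exact h

lemma main_ind {n : ℕ} {f : (Fin n → Bool) → Fin n → Bool} (hc : IsCommutative' f) :
    ∀ (k : ℕ) (x y : Fin n → Bool),
      (Finset.univ.filter (fun i => x i ≠ y i)).card = k →
      delta x y ⊆ delta x (f x) →
      delta y (f x) ⊆ delta y (f y) ∧ delta y (f y) ⊆ delta x (f x) := by
  intro k
  induction k with
  | zero =>
    intro x y hcard hsub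
    have hxy : x = y := by
      funext i
      by_contra hne
      have hi : i ∈ Finset.univ.filter (fun i => x i ≠ y i) := by
        simp [hne]
      rw [Finset.card_eq_zero] at hcard
      simp [hcard] at hi
    subst hxy
    exact ⟨subset_rfl, subset_rfl⟩
  | succ k IH =>
    intro x y hcard hsub
    have hne : (Finset.univ.filter (fun i => x i ≠ y i)).Nonempty := by
      rw [← Finset.card_pos, hcard]; omega
    obtain ⟨i, hi⟩ := hne
    have hixy : x i ≠ y i := by
      simpa using hi
    have hifx : x i ≠ f x i := hsub hixy
    set y' : Fin n → Bool := Function.update y i (x i) with hy'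
    have hy'i : y' i = x i := Function.update_self i (x i) y
    have hy'j : ∀ j, j ≠ i → y' j = y j := fun j hj => Function.update_of_ne hj _ y
    have hΔ' : delta x y' ⊆ delta x y := by
      intro j hj
      rw [mem_delta] at hj ⊢
      by_cases hji : j = i
      · subst hji; rw [hy'i] at hj; exact absurd rfl hj
      · rwa [hy'j j hji] at hj
    have hcard' : (Finset.univ.filter (fun j => x j ≠ y' j)).card = k := by
      have hset : (Finset.univ.filter (fun j => x j ≠ y' j)) =
          (Finset.univ.filter (fun j => x j ≠ y j)).erase i := by
        ext j
        simp only [Finset.mem_filter, Finset.mem_univ, true_and, Finset.mem_erase]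
        constructor
        · intro hj
          by_cases hji : j = i
          · subst hji; rw [hy'i] at hj; exact absurd rfl hj
          · rw [hy'j j hji] at hj; exact ⟨hji, hj⟩
        · rintro ⟨hji, hj⟩
          rwa [hy'j j hji]
      rw [hset, Finset.card_erase_of_mem hi, hcard]
      omega
    obtain ⟨A', B'⟩ := IH x y' hcard' (hΔ'.trans hsub)
    have hfy'i : y' i ≠ f y' i := A' (show y' i ≠ f x i by rw [hy'i]; exact hifx)
    have hyfy'i : y i = f y' i := by
      rw [hy'i] at hfy'i
      exact bool_ne_ne (x i) (y i) (f y' i) hixy hfy'i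
    have hupd : y = upd f {i} y' := by
      funext j
      by_cases hji : j = i
      · subst hji
        simp only [upd, Finset.mem_singleton, if_pos rfl]
        exact hyfy'i
      · simp only [upd, Finset.mem_singleton, if_neg hji]
        exact (hy'j j hji).symm
    have hstep : ∀ j, j ≠ i → f y j = f y' j := by
      intro j hj
      rw [hupd]
      exact comm_step hc hj y'
    have hyifx : y i = f x i := bool_ne_ne (x i) (y i) (f x i) hixy hifx
    constructor
    · intro j hj
      rw [mem_delta] at hj ⊢
      by_cases hji : j = i
      · subst hji; rw [hyifx] at hj; exact absurd rfl hj
      · have h1 : y' j ≠ f x j := by rwa [hy'j j hji]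
        have h2 : y' j ≠ f y' j := A' h1
        rwa [hy'j j hji, ← hstep j hji] at h2
    · intro j hj
      rw [mem_delta] at hj ⊢
      by_cases hji : j = i
      · subst hji; exact hifx
      · rw [← hy'j j hji, hstep j hji] at hj
        exact B' hj

lemma GA_iff {n : ℕ} (f : (Fin n → Bool) → Fin n → Bool) (x y : Fin n → Bool) :
    GA f x y ↔ y ∈ interval x (f x) := by
  constructor
  · rintro ⟨S, rfl⟩
    intro i hi
    rw [mem_delta] at hi ⊢
    simp only [upd] at hi
    by_cases hiS : i ∈ S
    · rw [if_pos hiS] at hi; exact hi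
    · rw [if_neg hiS] at hi; exact absurd rfl hi
  · intro hy
    refine ⟨Finset.univ.filter (fun i => x i ≠ y i), ?_⟩
    funext i
    simp only [upd, Finset.mem_filter, Finset.mem_univ, true_and]
    by_cases hne : x i ≠ y i
    · rw [if_pos hne]
      exact bool_ne_ne (x i) (y i) (f x i) hne (hy hne)
    · rw [if_neg hne]
      exact (not_ne_iff.mp hne).symm

/-- commutative networks are trapping; alternate definitions. -/
theorem stmt11 (n : ℕ) (f : (Fin n → Bool) → Fin n → Bool) :
    (IsCommutative' f → IsTrapping f) ∧
    List.TFAE [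
      IsCommutative' f,
      ∀ x : Fin n → Bool, ∀ y ∈ interval x (f x),
        interval y (f x) ⊆ interval y (f y) ∧ interval y (f y) ⊆ interval x (f x),
      ∀ S T : Finset (Fin n),
        BNle (upd f (symmDiff S T)) (upd2 f S T) ∧ BNle (upd2 f S T) (upd f (S ∪ T))
    ] := by
  -- (1) → (2)
  have h12 : IsCommutative' f →
      ∀ x : Fin n → Bool, ∀ y ∈ interval x (f x),
        interval y (f x) ⊆ interval y (f y) ∧ interval y (f y) ⊆ interval x (f x) := by
    intro hc x y hy
    obtain ⟨A, B⟩ := main_ind hc (Finset.univ.filter (fun i => x i ≠ y i)).card x y rfl hy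
    constructor
    · intro z hz
      exact fun i hi => A (hz hi)
    · intro z hz i hi
      by_cases hxy : x i = y i
      · have : y i ≠ z i := by rw [← hxy]; exact hi
        have := B (hz this)
        exact this
      · exact hy hxy
  -- (2) → (3)
  have h23 : (∀ x : Fin n → Bool, ∀ y ∈ interval x (f x),
        interval y (f x) ⊆ interval y (f y) ∧ interval y (f y) ⊆ interval x (f x)) →
      ∀ S T : Finset (Fin n),
        BNle (upd f (symmDiff S T)) (upd2 f S T) ∧ BNle (upd2 f S T) (upd f (S ∪ T)) := by
    intro h2 S T
    have key : ∀ x : Fin n → Bool,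
        (delta x (upd f (symmDiff S T) x) ⊆ delta x (upd2 f S T x)) ∧
        (delta x (upd2 f S T x) ⊆ delta x (upd f (S ∪ T) x)) := by
      intro x
      set y : Fin n → Bool := upd f S x with hy
      have hxy : y ∈ interval x (f x) := by
        intro i hi
        rw [mem_delta] at hi ⊢
        simp only [hy, upd] at hi
        by_cases hiS : i ∈ S
        · rw [if_pos hiS] at hi; exact hi
        · rw [if_neg hiS] at hi; exact absurd rfl hi
      obtain ⟨H1, H2⟩ := h2 x y hxy
      have D1 : delta y (f x) ⊆ delta y (f y) := H1 (fun i hi => hi)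
      have D2 : ∀ i : Fin n, x i = y i → y i ≠ f y i → x i ≠ f x i := by
        intro i hxyi hyfy
        have hw : Function.update y i (!(y i)) ∈ interval y (f y) := by
          intro j hj
          rw [mem_delta] at hj ⊢
          by_cases hji : j = i
          · subst hji; exact hyfy
          · rw [Function.update_of_ne hji] at hj; exact absurd rfl hj
        have hw2 := H2 hw
        have : x i ≠ Function.update y i (!(y i)) i := by
          rw [Function.update_self, hxyi]
          simp
        exact hw2 this
      have hyi_mem : ∀ i, y i = if i ∈ S then f x i else x i := fun i => rfl
      have hzi : ∀ i, upd2 f S T x i = if i ∈ T then f y i else y i := fun i => rfl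
      constructor
      · intro i hi
        rw [mem_delta] at hi ⊢
        simp only [upd] at hi
        by_cases hiST : i ∈ symmDiff S T
        · rw [if_pos hiST] at hi
          rw [Finset.mem_symmDiff] at hiST
          rw [hzi i]
          rcases hiST with ⟨hiS, hiT⟩ | ⟨hiT, hiS⟩
          · rw [if_neg hiT, hyi_mem i, if_pos hiS]
            exact hi
          · rw [if_pos hiT]
            have hyix : y i = x i := by rw [hyi_mem i, if_neg hiS]
            have h1 : y i ≠ f x i := by rw [hyix]; exact hi
            have h2 : y i ≠ f y i := D1 h1
            rw [hyix] at h2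
            exact h2
        · rw [if_neg hiST] at hi; exact absurd rfl hi
      · intro i hi
        rw [mem_delta] at hi ⊢
        rw [hzi i] at hi
        simp only [upd, Finset.mem_union]
        by_cases hiT : i ∈ T
        · rw [if_pos hiT] at hi
          have hfx : x i ≠ f x i := by
            by_contra hcon
            have hxyi : x i = y i := by
              rw [hyi_mem i]
              by_cases hiS : i ∈ S
              · rw [if_pos hiS]; exact hcon
              · rw [if_neg hiS]
            have : y i ≠ f y i := by rw [← hxyi]; exact hi
            exact (D2 i hxyi this) hcon
          rw [if_pos (Or.inr hiT)]
          exact hfx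
        · rw [if_neg hiT, hyi_mem i] at hi
          by_cases hiS : i ∈ S
          · rw [if_pos hiS] at hi
            rw [if_pos (Or.inl hiS)]
            exact hi
          · rw [if_neg hiS] at hi
            exact absurd rfl hi
    exact ⟨fun x => (key x).1, fun x => (key x).2⟩
  -- (3) → (1)
  have h31 : (∀ S T : Finset (Fin n),
        BNle (upd f (symmDiff S T)) (upd2 f S T) ∧ BNle (upd2 f S T) (upd f (S ∪ T))) →
      IsCommutative' f := by
    intro h3 i j
    by_cases hij : i = j
    · subst hij; rfl
    · have hsd : symmDiff ({i} : Finset (Fin n)) {j} = {i} ∪ {j} := by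
        ext k
        simp only [Finset.mem_symmDiff, Finset.mem_union, Finset.mem_singleton]
        constructor
        · rintro (⟨h, _⟩ | ⟨h, _⟩)
          · exact Or.inl h
          · exact Or.inr h
        · rintro (h | h)
          · exact Or.inl ⟨h, by rw [h]; exact hij⟩
          · exact Or.inr ⟨h, by rw [h]; exact fun hc => hij hc.symm⟩
      have hsd' : symmDiff ({j} : Finset (Fin n)) {i} = {i} ∪ {j} := by
        rw [symmDiff_comm]; exact hsd
      have hun : ({j} : Finset (Fin n)) ∪ {i} = {i} ∪ {j} := Finset.union_comm _ _
      obtain ⟨L1, U1⟩ := h3 {i} {j}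
      obtain ⟨L2, U2⟩ := h3 {j} {i}
      rw [hsd] at L1
      rw [hsd'] at L2
      rw [hun] at U2
      funext x k
      have hE1 : delta x (upd2 f {i} {j} x) = delta x (upd f ({i} ∪ {j}) x) :=
        Set.Subset.antisymm (U1 x) (L1 x)
      have hE2 : delta x (upd2 f {j} {i} x) = delta x (upd f ({i} ∪ {j}) x) :=
        Set.Subset.antisymm (U2 x) (L2 x)
      have hiff : (x k ≠ upd2 f {i} {j} x k) ↔ (x k ≠ upd2 f {j} {i} x k) := by
        have := Set.ext_iff.mp (hE1.trans hE2.symm) k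
        exact this
      exact bool_iff_eq (x k) _ _ hiff
  refine ⟨?_, ?_⟩
  · intro hc
    intro x y z hxy hyz
    rw [GA_iff] at hxy hyz ⊢
    exact (h12 hc x y hxy).2 hyz
  · tfae_have 1 → 2 := h12
    tfae_have 2 → 3 := h23
    tfae_have 3 → 1 := h31
    tfae_finish
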